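/- Let n ≥ 3, let A₁, A₂ be real symmetric n×n matrices, and let 0 < α₁ < α₂ < ∞. Then the set W₃ = {(xᵀA₁x, xᵀA₂x) : α₁ ≤ xᵀx ≤ α₂, x ∈ ℝⁿ} ⊂ ℝ² is convex and compact. -/

import Mathlib

open Matrix Set

namespace AB

variable {n : ℕ}

/-- quadratic form of a matrix -/
def qf (A : Matrix (Fin n) (Fin n) ℝ) (x : Fin n → ℝ) : ℝ := x ⬝ᵥ A *ᵥ x

lemma continuous_qf (A : Matrix (Fin n) (Fin n) ℝ) : Continuous (qf A) := by
  have h : qf A = fun x : Fin n → ℝ => ∑ i, x i * ∑ j, A i j * x j := by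
    funext x; simp [qf, dotProduct, mulVec]
  rw [h]
  exact continuous_finset_sum _ fun i _ => (continuous_apply i).mul
    (continuous_finset_sum _ fun j _ => continuous_const.mul (continuous_apply j))

lemma continuous_dotSelf : Continuous (fun x : Fin n → ℝ => x ⬝ᵥ x) := by
  have h : (fun x : Fin n → ℝ => x ⬝ᵥ x) = fun x : Fin n → ℝ => ∑ i, x i * x i := by
    funext x; simp [dotProduct]
  rw [h]
  exact continuous_finset_sum _ fun i _ => (continuous_apply i).mul (continuous_apply i)

lemma qf_smul (A : Matrix (Fin n) (Fin n) ℝ) (c : ℝ) (x : Fin n → ℝ) :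
    qf A (c • x) = c ^ 2 * qf A x := by
  simp [qf, mulVec_smul, smul_dotProduct, dotProduct_smul, smul_eq_mul]
  ring

lemma dotSelf_smul (c : ℝ) (x : Fin n → ℝ) :
    (c • x) ⬝ᵥ (c • x) = c ^ 2 * (x ⬝ᵥ x) := by
  simp [smul_dotProduct, dotProduct_smul, smul_eq_mul]
  ring

lemma qf_neg (A : Matrix (Fin n) (Fin n) ℝ) (x : Fin n → ℝ) : qf A (-x) = qf A x := by
  simp [qf, mulVec_neg]

/-- admissible "mass distribution" -/
def Adm (lam s : Fin n → ℝ) : Prop :=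
  (∀ i, 0 ≤ s i) ∧ ∑ i, s i = 1 ∧ ∑ i, lam i * s i = 0

/-- level set of diagonal quadratic form on unit sphere -/
def MD (lam : Fin n → ℝ) : Set (Fin n → ℝ) :=
  {x | x ⬝ᵥ x = 1 ∧ ∑ i, lam i * (x i) ^ 2 = 0}

/-- signed square-root vector -/
noncomputable def sv (ε s : Fin n → ℝ) : Fin n → ℝ := fun i => ε i * Real.sqrt (s i)

def IsSign (ε : Fin n → ℝ) : Prop := ∀ i, ε i = 1 ∨ ε i = -1

lemma IsSign.mul_self {ε : Fin n → ℝ} (hε : IsSign ε) (i : Fin n) : ε i * ε i = 1 := by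
  rcases hε i with h | h <;> rw [h] <;> norm_num

lemma IsSign.neg {ε : Fin n → ℝ} (hε : IsSign ε) : IsSign (-ε) := fun i => by
  rcases hε i with h | h <;> simp [h]

lemma IsSign.update {ε : Fin n → ℝ} (hε : IsSign ε) (j : Fin n) :
    IsSign (Function.update ε j (-ε j)) := fun i => by
  rcases eq_or_ne i j with h | h
  · subst h; rcases hε i with h' | h' <;> simp [h']
  · simpa [Function.update_of_ne h] using hε i

lemma sv_sq {ε s : Fin n → ℝ} (hε : IsSign ε) (hs : ∀ i, 0 ≤ s i) (i : Fin n) :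
    sv ε s i * sv ε s i = s i := by
  have h1 : ε i * ε i = 1 := hε.mul_self i
  have h2 : Real.sqrt (s i) * Real.sqrt (s i) = s i := Real.mul_self_sqrt (hs i)
  calc sv ε s i * sv ε s i = (ε i * ε i) * (Real.sqrt (s i) * Real.sqrt (s i)) := by
        simp [sv]; ring
    _ = s i := by rw [h1, h2, one_mul]

lemma sv_mem {lam s ε : Fin n → ℝ} (hs : Adm lam s) (hε : IsSign ε) :
    sv ε s ∈ MD lam := by
  constructor
  · calc (sv ε s) ⬝ᵥ (sv ε s) = ∑ i, sv ε s i * sv ε s i := rfl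
      _ = ∑ i, s i := Finset.sum_congr rfl fun i _ => sv_sq hε hs.1 i
      _ = 1 := hs.2.1
  · have e : ∑ i, lam i * (sv ε s i) ^ 2 = ∑ i, lam i * s i := by
      refine Finset.sum_congr rfl fun i _ => ?_
      rw [sq, sv_sq hε hs.1 i]
    rw [e]; exact hs.2.2

lemma adm_combo {lam s₀ s₁ : Fin n → ℝ} (h₀ : Adm lam s₀) (h₁ : Adm lam s₁)
    {t : ℝ} (ht : t ∈ Icc (0:ℝ) 1) : Adm lam (fun i => (1 - t) * s₀ i + t * s₁ i) := by
  obtain ⟨ht0, ht1⟩ := ht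
  refine ⟨fun i => add_nonneg (mul_nonneg (by linarith) (h₀.1 i))
    (mul_nonneg ht0 (h₁.1 i)), ?_, ?_⟩
  · rw [Finset.sum_add_distrib, ← Finset.mul_sum, ← Finset.mul_sum, h₀.2.1, h₁.2.1]; ring
  · have e : ∀ i : Fin n, lam i * ((1 - t) * s₀ i + t * s₁ i)
        = (1 - t) * (lam i * s₀ i) + t * (lam i * s₁ i) := fun i => by ring
    rw [Finset.sum_congr rfl fun i _ => e i, Finset.sum_add_distrib,
      ← Finset.mul_sum, ← Finset.mul_sum, h₀.2.2, h₁.2.2]; ring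

lemma lift {lam s₀ s₁ ε : Fin n → ℝ} (h₀ : Adm lam s₀) (h₁ : Adm lam s₁) (hε : IsSign ε) :
    JoinedIn (MD lam) (sv ε s₀) (sv ε s₁) := by
  apply JoinedIn.ofLine (f := fun t => sv ε (fun i => (1 - t) * s₀ i + t * s₁ i))
  · apply Continuous.continuousOn
    apply continuous_pi; intro i
    exact continuous_const.mul (Real.continuous_sqrt.comp
      ((continuous_const.sub continuous_id).mul continuous_const |>.add
        (continuous_id.mul continuous_const)))
  · simp [sv]
  · simp [sv]
  · rintro x ⟨t, ht, rfl⟩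
    exact sv_mem (adm_combo h₀ h₁ ht) hε

lemma MD_neg {lam : Fin n → ℝ} {x : Fin n → ℝ} (hx : x ∈ MD lam) : -x ∈ MD lam := by
  constructor
  · have : (-x) ⬝ᵥ (-x) = x ⬝ᵥ x := by simp
    rw [this]; exact hx.1
  · have : ∀ i : Fin n, lam i * ((-x) i) ^ 2 = lam i * (x i) ^ 2 := fun i => by
      simp [neg_sq]
    rw [Finset.sum_congr rfl fun i _ => this i]; exact hx.2

lemma joinedIn_neg {lam : Fin n → ℝ} {x y : Fin n → ℝ}
    (h : JoinedIn (MD lam) x y) : JoinedIn (MD lam) (-x) (-y) := by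
  have := (h.map (f := fun z : Fin n → ℝ => -z) continuous_neg)
  exact this.mono (by rintro _ ⟨w, hw, rfl⟩; exact MD_neg hw)

lemma exists_third (hn : 3 ≤ n) (a b : Fin n) : ∃ k : Fin n, k ≠ a ∧ k ≠ b := by
  classical
  have hpos : 0 < (Finset.univ \ {a, b} : Finset (Fin n)).card := by
    have h2 : ({a, b} : Finset (Fin n)).card ≤ 2 :=
      le_trans (Finset.card_insert_le _ _) (by simp)
    rw [Finset.card_sdiff_of_subset (Finset.subset_univ _)]
    simp only [Finset.card_univ, Fintype.card_fin]
    omega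
  obtain ⟨k, hk⟩ := Finset.card_pos.mp hpos
  rw [Finset.mem_sdiff] at hk
  simp only [Finset.mem_insert, Finset.mem_singleton, not_or] at hk
  exact ⟨k, hk.2.1, hk.2.2⟩

/-- two-point mass distribution -/
def twoPt (a b : Fin n) (p : ℝ) : Fin n → ℝ :=
  fun i => if i = a then p else if i = b then 1 - p else 0

lemma twoPt_apply_other {a b : Fin n} {p : ℝ} {i : Fin n} (hia : i ≠ a) (hib : i ≠ b) :
    twoPt a b p i = 0 := by simp [twoPt, hia, hib]

lemma adm_twoPt {lam : Fin n → ℝ} {a b : Fin n} {p : ℝ} (hab : a ≠ b)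
    (h0 : 0 ≤ p) (h1 : p ≤ 1) (hl : p * lam a + (1 - p) * lam b = 0) :
    Adm lam (twoPt a b p) := by
  classical
  have hsub : ∀ (f : Fin n → ℝ), (∀ i, i ≠ a → i ≠ b → f i = 0) →
      ∑ i, f i = f a + f b := by
    intro f hf
    rw [← Finset.sum_subset (Finset.subset_univ ({a, b} : Finset (Fin n)))
      (fun x _ hx => by
        simp only [Finset.mem_insert, Finset.mem_singleton, not_or] at hx
        exact hf x hx.1 hx.2)]
    exact Finset.sum_pair hab
  refine ⟨fun i => ?_, ?_, ?_⟩
  · simp only [twoPt]; split_ifs <;> linarith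
  · rw [hsub _ (fun i hia hib => twoPt_apply_other hia hib)]
    simp [twoPt, hab, Ne.symm hab]
  · rw [hsub (fun i => lam i * twoPt a b p i)
      (fun i hia hib => by show lam i * twoPt a b p i = 0
                           rw [twoPt_apply_other hia hib, mul_zero])]
    show lam a * twoPt a b p a + lam b * twoPt a b p b = 0
    rw [show twoPt a b p a = p by simp [twoPt],
      show twoPt a b p b = 1 - p by simp [twoPt, Ne.symm hab]]
    linarith [hl]

lemma flip_at {lam s s' : Fin n → ℝ} (hs : Adm lam s) (hs' : Adm lam s')
    {j : Fin n} (hj : s' j = 0) {ε : Fin n → ℝ} (hε : IsSign ε) :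
    JoinedIn (MD lam) (sv ε s) (sv (Function.update ε j (-ε j)) s) := by
  have hε' := hε.update j
  have e : sv ε s' = sv (Function.update ε j (-ε j)) s' := by
    funext i
    rcases eq_or_ne i j with h | h
    · subst h; simp [sv, hj]
    · simp [sv, Function.update_of_ne h]
  exact (lift hs hs' hε).trans (e ▸ lift hs' hs hε')

lemma conn2_glue {lam : Fin n → ℝ} {u v P Q : Fin n → ℝ}
    (h1 : JoinedIn (MD lam) u P) (h2 : JoinedIn (MD lam) v Q)
    (h3 : JoinedIn (MD lam) P Q ∨ JoinedIn (MD lam) P (-Q)) :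
    JoinedIn (MD lam) u v ∨ JoinedIn (MD lam) u (-v) := by
  rcases h3 with h | h
  · exact Or.inl (h1.trans (h.trans h2.symm))
  · exact Or.inr (h1.trans (h.trans (joinedIn_neg h2).symm))

lemma sign_eq_neg {a b : ℝ} (ha : a = 1 ∨ a = -1) (hb : b = 1 ∨ b = -1) (h : a ≠ b) :
    a = -b := by rcases ha with h1 | h1 <;> rcases hb with h2 | h2 <;> simp_all

lemma sv_neg (ε s : Fin n → ℝ) : -(sv ε s) = sv (-ε) s := by
  funext i; simp [sv]

lemma reconcile' {lam sc : Fin n → ℝ} (hsc : Adm lam sc) {i0 j0 : Fin n}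
    (hij : i0 ≠ j0)
    (hsupp : ∀ i, i ≠ i0 → i ≠ j0 → sc i = 0)
    (hflipJ : ∀ η : Fin n → ℝ, IsSign η →
      JoinedIn (MD lam) (sv η sc) (sv (Function.update η i0 (-η i0)) sc))
    {ε δ : Fin n → ℝ} (hε : IsSign ε) (hδ : IsSign δ) :
    JoinedIn (MD lam) (sv ε sc) (sv δ sc) ∨ JoinedIn (MD lam) (sv ε sc) (-(sv δ sc)) := by
  classical
  have eqsv : ∀ η η' : Fin n → ℝ, η i0 = η' i0 → η j0 = η' j0 → sv η sc = sv η' sc := by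
    intro η η' h1 h2; funext i
    by_cases hi : i = i0
    · rw [hi]; simp [sv, h1]
    · by_cases hj : i = j0
      · rw [hj]; simp [sv, h2]
      · simp [sv, hsupp i hi hj]
  by_cases hA : ε i0 = δ i0 <;> by_cases hB : ε j0 = δ j0
  · left
    rw [eqsv ε δ hA hB]
    exact JoinedIn.refl (sv_mem hsc hδ)
  · -- agree at i0, disagree at j0 : flip at i0 then global sign
    right
    have hB' : ε j0 = -δ j0 := sign_eq_neg (hε j0) (hδ j0) hB
    have hkey := hflipJ ε hε
    have e : sv (Function.update ε i0 (-ε i0)) sc = sv (-δ) sc := by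
      apply eqsv
      · rw [Function.update_self, Pi.neg_apply, hA]
      · rw [Function.update_of_ne hij.symm, Pi.neg_apply, hB']
    rw [e, ← sv_neg] at hkey
    exact hkey
  · -- disagree at i0, agree at j0 : flip at i0
    left
    have hA' : ε i0 = -δ i0 := sign_eq_neg (hε i0) (hδ i0) hA
    have hkey := hflipJ ε hε
    have e : sv (Function.update ε i0 (-ε i0)) sc = sv δ sc := by
      apply eqsv
      · rw [Function.update_self, hA']; ring
      · rw [Function.update_of_ne hij.symm, hB]
    rw [e] at hkey
    exact hkey
  · -- disagree at both : global sign
    right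
    have hA' : ε i0 = -δ i0 := sign_eq_neg (hε i0) (hδ i0) hA
    have hB' : ε j0 = -δ j0 := sign_eq_neg (hε j0) (hδ j0) hB
    rw [sv_neg, ← eqsv ε (-δ) (by simpa using hA') (by simpa using hB')]
    exact JoinedIn.refl (sv_mem hsc hε)

lemma conn (hn : 3 ≤ n) (lam : Fin n → ℝ) {u v : Fin n → ℝ}
    (hu : u ∈ MD lam) (hv : v ∈ MD lam) :
    JoinedIn (MD lam) u v ∨ JoinedIn (MD lam) u (-v) := by
  classical
  have adm_sq : ∀ {w : Fin n → ℝ}, w ∈ MD lam → Adm lam (fun i => w i ^ 2) := by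
    intro w hw
    refine ⟨fun i => sq_nonneg _, ?_, hw.2⟩
    have e : ∑ i, w i ^ 2 = w ⬝ᵥ w := by simp [dotProduct, sq]
    rw [e, hw.1]
  set ε : Fin n → ℝ := fun i => if u i < 0 then (-1:ℝ) else 1 with hεdef
  set δ : Fin n → ℝ := fun i => if v i < 0 then (-1:ℝ) else 1 with hδdef
  have hε : IsSign ε := fun i => by by_cases h : u i < 0 <;> simp [hεdef, h]
  have hδ : IsSign δ := fun i => by by_cases h : v i < 0 <;> simp [hδdef, h]
  have hueq : u = sv ε (fun i => u i ^ 2) := by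
    funext i
    simp only [sv, hεdef, Real.sqrt_sq_eq_abs]
    by_cases h : u i < 0
    · rw [if_pos h, abs_of_neg h]; ring
    · rw [if_neg h, abs_of_nonneg (not_lt.1 h), one_mul]
  have hveq : v = sv δ (fun i => v i ^ 2) := by
    funext i
    simp only [sv, hδdef, Real.sqrt_sq_eq_abs]
    by_cases h : v i < 0
    · rw [if_pos h, abs_of_neg h]; ring
    · rw [if_neg h, abs_of_nonneg (not_lt.1 h), one_mul]
  have hsu : Adm lam (fun i => u i ^ 2) := adm_sq hu
  have hsv : Adm lam (fun i => v i ^ 2) := adm_sq hv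
  by_cases hzero : ∃ k, lam k = 0
  · -- some zero eigenvalue : connect both to ±e_k
    obtain ⟨k, hk⟩ := hzero
    obtain ⟨j, hjk, -⟩ := exists_third hn k k
    have hadm : Adm lam (twoPt k j 1) :=
      adm_twoPt (Ne.symm hjk) zero_le_one le_rfl (by rw [hk]; ring)
    have h1 : JoinedIn (MD lam) u (sv ε (twoPt k j 1)) := by
      conv_lhs => rw [hueq]
      exact lift hsu hadm hε
    have h2 : JoinedIn (MD lam) v (sv δ (twoPt k j 1)) := by
      conv_lhs => rw [hveq]
      exact lift hsv hadm hδ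
    have hsupp : ∀ i, i ≠ k → twoPt k j 1 i = 0 := by
      intro i hik
      by_cases hij : i = j
      · subst hij; simp [twoPt, hik]
      · exact twoPt_apply_other hik hij
    apply conn2_glue h1 h2
    rcases eq_or_ne (ε k) (δ k) with h | h
    · left
      have e : sv ε (twoPt k j 1) = sv δ (twoPt k j 1) := by
        funext i
        rcases eq_or_ne i k with hik | hik
        · rw [hik]; simp [sv, h]
        · simp [sv, hsupp i hik]
      rw [e]
      exact JoinedIn.refl h2.target_mem
    · right
      have e : sv ε (twoPt k j 1) = -(sv δ (twoPt k j 1)) := by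
        rw [sv_neg]
        funext i
        rcases eq_or_ne i k with hik | hik
        · rw [hik]
          simp only [sv, Pi.neg_apply]
          rw [sign_eq_neg (hε k) (hδ k) h]
        · simp [sv, hsupp i hik]
      rw [e]
      exact JoinedIn.refl (MD_neg h2.target_mem)
  · -- all eigenvalues nonzero
    push_neg at hzero
    have hne : (Finset.univ : Finset (Fin n)).Nonempty :=
      ⟨⟨0, by omega⟩, Finset.mem_univ _⟩
    obtain ⟨i₀, -, hi₀⟩ := Finset.exists_min_image Finset.univ lam hne
    obtain ⟨j₀, -, hj₀⟩ := Finset.exists_max_image Finset.univ lam hne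
    have hmin : lam i₀ < 0 := by
      have h1 : lam i₀ = ∑ i, lam i₀ * u i ^ 2 := by
        rw [← Finset.mul_sum, hsu.2.1, mul_one]
      have h2 : ∑ i, lam i₀ * u i ^ 2 ≤ ∑ i, lam i * u i ^ 2 :=
        Finset.sum_le_sum fun i _ =>
          mul_le_mul_of_nonneg_right (hi₀ i (Finset.mem_univ i)) (sq_nonneg _)
      have h3 := hu.2
      have h4 : lam i₀ ≤ 0 := by linarith
      exact lt_of_le_of_ne h4 (hzero i₀)
    have hmax : 0 < lam j₀ := by
      have h1 : lam j₀ = ∑ i, lam j₀ * u i ^ 2 := by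
        rw [← Finset.mul_sum, hsu.2.1, mul_one]
      have h2 : ∑ i, lam i * u i ^ 2 ≤ ∑ i, lam j₀ * u i ^ 2 :=
        Finset.sum_le_sum fun i _ =>
          mul_le_mul_of_nonneg_right (hj₀ i (Finset.mem_univ i)) (sq_nonneg _)
      have h3 := hu.2
      have h4 : 0 ≤ lam j₀ := by linarith
      exact lt_of_le_of_ne h4 (Ne.symm (hzero j₀))
    have hij : i₀ ≠ j₀ := fun h => by rw [h] at hmin; linarith
    have hden : (0:ℝ) < lam j₀ - lam i₀ := by linarith
    set t := lam j₀ / (lam j₀ - lam i₀) with htdef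
    have ht0 : 0 ≤ t := le_of_lt (div_pos hmax hden)
    have ht1 : t ≤ 1 := le_of_lt ((div_lt_one hden).2 (by linarith))
    have hlt : t * lam i₀ + (1 - t) * lam j₀ = 0 := by
      rw [htdef]; field_simp; ring
    have hsc : Adm lam (twoPt i₀ j₀ t) := adm_twoPt hij ht0 ht1 hlt
    have h1 : JoinedIn (MD lam) u (sv ε (twoPt i₀ j₀ t)) := by
      conv_lhs => rw [hueq]
      exact lift hsu hsc hε
    have h2 : JoinedIn (MD lam) v (sv δ (twoPt i₀ j₀ t)) := by
      conv_lhs => rw [hveq]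
      exact lift hsv hsc hδ
    obtain ⟨k, hki, hkj⟩ := exists_third hn i₀ j₀
    have hsupp : ∀ i, i ≠ i₀ → i ≠ j₀ → twoPt i₀ j₀ t i = 0 :=
      fun i hi hj => twoPt_apply_other hi hj
    have hflip : ∃ js : Fin n, (js = i₀ ∨ js = j₀) ∧ ∀ η : Fin n → ℝ, IsSign η →
        JoinedIn (MD lam) (sv η (twoPt i₀ j₀ t))
          (sv (Function.update η js (-η js)) (twoPt i₀ j₀ t)) := by
      rcases lt_or_gt_of_ne (hzero k) with hkneg | hkpos
      · -- lam k < 0 : flip at i₀ via twoPt j₀ k q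
        have hdq : (0:ℝ) < lam j₀ - lam k := by linarith
        set q := (-lam k) / (lam j₀ - lam k) with hqdef
        have hq0 : 0 ≤ q := le_of_lt (div_pos (by linarith) hdq)
        have hq1 : q ≤ 1 := le_of_lt ((div_lt_one hdq).2 (by linarith))
        have hlq : q * lam j₀ + (1 - q) * lam k = 0 := by
          rw [hqdef]; field_simp; ring
        have hsq : Adm lam (twoPt j₀ k q) := adm_twoPt (Ne.symm hkj) hq0 hq1 hlq
        have hzero' : twoPt j₀ k q i₀ = 0 := twoPt_apply_other hij (Ne.symm hki)
        exact ⟨i₀, Or.inl rfl, fun η hη => flip_at hsc hsq hzero' hη⟩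
      · -- lam k > 0 : flip at j₀ via twoPt i₀ k p
        have hdp : (0:ℝ) < lam k - lam i₀ := by linarith
        set p := lam k / (lam k - lam i₀) with hpdef
        have hp0 : 0 ≤ p := le_of_lt (div_pos hkpos hdp)
        have hp1 : p ≤ 1 := le_of_lt ((div_lt_one hdp).2 (by linarith))
        have hlp : p * lam i₀ + (1 - p) * lam k = 0 := by
          rw [hpdef]; field_simp; ring
        have hsp : Adm lam (twoPt i₀ k p) := adm_twoPt (Ne.symm hki) hp0 hp1 hlp
        have hzero' : twoPt i₀ k p j₀ = 0 := twoPt_apply_other (Ne.symm hij) (Ne.symm hkj)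
        exact ⟨j₀, Or.inr rfl, fun η hη => flip_at hsc hsp hzero' hη⟩
    obtain ⟨js, hjs, hflipJ⟩ := hflip
    rcases hjs with h | h <;> subst h
    · exact conn2_glue h1 h2 (reconcile' hsc hij hsupp hflipJ hε hδ)
    · exact conn2_glue h1 h2
        (reconcile' hsc hij.symm (fun i hi hj => hsupp i hj hi) hflipJ hε hδ)

/-- level set of a matrix quadratic form on the unit sphere -/
def MS (B : Matrix (Fin n) (Fin n) ℝ) : Set (Fin n → ℝ) :=
  {x | x ⬝ᵥ x = 1 ∧ qf B x = 0}

lemma conn_mat (hn : 3 ≤ n) {B : Matrix (Fin n) (Fin n) ℝ} (hB : B.IsHermitian)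
    {u v : Fin n → ℝ} (hu : u ∈ MS B) (hv : v ∈ MS B) :
    JoinedIn (MS B) u v ∨ JoinedIn (MS B) u (-v) := by
  classical
  set U : Matrix (Fin n) (Fin n) ℝ := (hB.eigenvectorUnitary : Matrix (Fin n) (Fin n) ℝ)
    with hUdef
  set lam : Fin n → ℝ := hB.eigenvalues with hlamdef
  have hUU : star U * U = 1 := Unitary.coe_star_mul_self hB.eigenvectorUnitary
  have hUU' : U * star U = 1 := Unitary.coe_mul_star_self hB.eigenvectorUnitary
  have hTU : Uᵀ * U = 1 := by
    rw [← conjTranspose_eq_transpose_of_trivial, ← star_eq_conjTranspose]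
    exact hUU
  have hUT : U * Uᵀ = 1 := by
    rw [← conjTranspose_eq_transpose_of_trivial, ← star_eq_conjTranspose]
    exact hUU'
  have hspec : B = U * diagonal lam * star U := by
    have h := hB.spectral_theorem
    rw [hlamdef, hUdef]
    convert h using 2
    rw [Unitary.conjStarAlgAut_apply]; rfl
  have key0 : ∀ y z : Fin n → ℝ, (U *ᵥ y) ⬝ᵥ (U *ᵥ z) = y ⬝ᵥ z := by
    intro y z
    calc (U *ᵥ y) ⬝ᵥ (U *ᵥ z) = ((U *ᵥ y) ᵥ* U) ⬝ᵥ z := dotProduct_mulVec _ _ _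
      _ = (Uᵀ *ᵥ (U *ᵥ y)) ⬝ᵥ z := by rw [mulVec_transpose]
      _ = ((Uᵀ * U) *ᵥ y) ⬝ᵥ z := by rw [mulVec_mulVec]
      _ = y ⬝ᵥ z := by rw [hTU, one_mulVec]
  have key2 : ∀ y : Fin n → ℝ, qf B (U *ᵥ y) = ∑ i, lam i * (y i) ^ 2 := by
    intro y
    have hBU2 : B * U = U * diagonal lam := by
      rw [hspec, mul_assoc (U * diagonal lam) (star U) U, hUU, mul_one]
    have hBU : B *ᵥ (U *ᵥ y) = U *ᵥ (diagonal lam *ᵥ y) := by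
      rw [mulVec_mulVec, mulVec_mulVec, hBU2]
    rw [qf, hBU, key0 y (diagonal lam *ᵥ y)]
    simp only [dotProduct, mulVec_diagonal]
    exact Finset.sum_congr rfl fun i _ => by ring
  set f : (Fin n → ℝ) → (Fin n → ℝ) := fun y => U *ᵥ y with hfdef
  have hf : Continuous f := by
    have : f = ⇑(U.mulVecLin) := by funext y; simp [hfdef, mulVecLin_apply]
    rw [this]
    exact LinearMap.continuous_of_finiteDimensional _
  have himg : f '' (MD lam) ⊆ MS B := by
    rintro - ⟨y, hy, rfl⟩
    exact ⟨by rw [hfdef]; rw [key0 y y]; exact hy.1,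
      by rw [hfdef]; rw [key2 y]; exact hy.2⟩
  have hsurj : ∀ x : Fin n → ℝ, f (Uᵀ *ᵥ x) = x := by
    intro x
    simp only [hfdef, mulVec_mulVec, hUT, one_mulVec]
  have hmem : ∀ x : Fin n → ℝ, x ∈ MS B → Uᵀ *ᵥ x ∈ MD lam := by
    intro x hx
    constructor
    · have := key0 (Uᵀ *ᵥ x) (Uᵀ *ᵥ x)
      rw [show U *ᵥ (Uᵀ *ᵥ x) = x from hsurj x] at this
      rw [← this, hx.1]
    · have := key2 (Uᵀ *ᵥ x)
      rw [show U *ᵥ (Uᵀ *ᵥ x) = x from hsurj x] at this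
      rw [← this, hx.2]
  rcases conn hn lam (hmem u hu) (hmem v hv) with h | h
  · left
    have := (h.map hf).mono himg
    rwa [hsurj u, hsurj v] at this
  · right
    have := (h.map hf).mono himg
    rw [hsurj u] at this
    have e : f (-(Uᵀ *ᵥ v)) = -v := by
      simp only [hfdef, mulVec_neg]
      rw [show U *ᵥ (Uᵀ *ᵥ v) = v from hsurj v]
    rwa [e] at this

/-- the joint image of two quadratic forms on the unit sphere -/
def SI (A₁ A₂ : Matrix (Fin n) (Fin n) ℝ) : Set (ℝ × ℝ) :=
  {p | ∃ x : Fin n → ℝ, x ⬝ᵥ x = 1 ∧ p = (qf A₁ x, qf A₂ x)}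

lemma mem_uIcc_combo {X Y a b : ℝ} (ha : 0 ≤ a) (hb : 0 ≤ b) (hab : a + b = 1) :
    a * X + b * Y ∈ uIcc X Y := by
  rcases le_total X Y with h | h
  · rw [uIcc_of_le h]
    constructor
    · calc X = a * X + b * X := by rw [← add_mul, hab, one_mul]
        _ ≤ a * X + b * Y := by nlinarith [mul_le_mul_of_nonneg_left h hb]
    · calc a * X + b * Y ≤ a * Y + b * Y := by nlinarith [mul_le_mul_of_nonneg_left h ha]
        _ = Y := by rw [← add_mul, hab, one_mul]
  · rw [uIcc_of_ge h]
    constructor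
    · calc Y = a * Y + b * Y := by rw [← add_mul, hab, one_mul]
        _ ≤ a * X + b * Y := by nlinarith [mul_le_mul_of_nonneg_left h ha]
    · calc a * X + b * Y ≤ a * X + b * X := by nlinarith [mul_le_mul_of_nonneg_left h hb]
        _ = X := by rw [← add_mul, hab, one_mul]

theorem SI_convex (hn : 3 ≤ n) {A₁ A₂ : Matrix (Fin n) (Fin n) ℝ}
    (hA₁ : A₁.IsSymm) (hA₂ : A₂.IsSymm) : Convex ℝ (SI A₁ A₂) := by
  rintro p ⟨u, hu1, hup⟩ q ⟨v, hv1, hvq⟩ a b ha hb hab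
  by_cases hpq : p = q
  · subst hpq
    have e : a • p + b • p = p := by rw [← add_smul, hab, one_smul]
    rw [e]
    exact ⟨u, hu1, hup⟩
  -- set up the separating functional
  set c₁ : ℝ := p.2 - q.2 with hc₁
  set c₂ : ℝ := q.1 - p.1 with hc₂
  set m : ℝ := c₁ * p.1 + c₂ * p.2 with hm
  have hcq : c₁ * q.1 + c₂ * q.2 = m := by rw [hm, hc₁, hc₂]; ring
  set B : Matrix (Fin n) (Fin n) ℝ := c₁ • A₁ + c₂ • A₂ - m • (1 : Matrix (Fin n) (Fin n) ℝ)
    with hB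
  have hBsymm : B.IsSymm := by
    unfold Matrix.IsSymm
    rw [hB, transpose_sub, transpose_add, transpose_smul, transpose_smul, transpose_smul,
      hA₁.eq, hA₂.eq, transpose_one]
  have hBherm : B.IsHermitian := by
    rw [IsHermitian, conjTranspose_eq_transpose_of_trivial]
    exact hBsymm
  have hqB : ∀ x : Fin n → ℝ, qf B x = c₁ * qf A₁ x + c₂ * qf A₂ x - m * (x ⬝ᵥ x) := by
    intro x
    simp only [qf, hB, sub_mulVec, add_mulVec, smul_mulVec, one_mulVec,
      dotProduct_sub, dotProduct_add, dotProduct_smul, smul_eq_mul]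
  have hp1 : p.1 = qf A₁ u := by rw [hup]
  have hp2 : p.2 = qf A₂ u := by rw [hup]
  have hq1 : q.1 = qf A₁ v := by rw [hvq]
  have hq2 : q.2 = qf A₂ v := by rw [hvq]
  have huB : u ∈ MS B := ⟨hu1, by rw [hqB, hu1, ← hp1, ← hp2, hm]; ring⟩
  have hvB : v ∈ MS B := ⟨hv1, by rw [hqB, hv1, ← hq1, ← hq2, ← hcq]; ring⟩
  -- get a path from u to v or -v inside the level set
  have hconn := conn_mat hn hBherm huB hvB
  obtain ⟨v', hJ, hv'1, hv'2⟩ : ∃ v' : Fin n → ℝ, JoinedIn (MS B) u v' ∧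
      qf A₁ v' = q.1 ∧ qf A₂ v' = q.2 := by
    rcases hconn with h | h
    · exact ⟨v, h, hq1.symm, hq2.symm⟩
    · exact ⟨-v, h, by rw [qf_neg, hq1], by rw [qf_neg, hq2]⟩
  obtain ⟨γ, hγ⟩ := hJ
  -- intermediate value argument along the path
  set g : ℝ → ℝ := fun s => c₂ * qf A₁ (γ.extend s) - c₁ * qf A₂ (γ.extend s) with hg
  have hgc : Continuous g := by
    apply Continuous.sub
    · exact continuous_const.mul ((continuous_qf A₁).comp γ.continuous_extend)
    · exact continuous_const.mul ((continuous_qf A₂).comp γ.continuous_extend)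
  have hg0 : g 0 = c₂ * p.1 - c₁ * p.2 := by
    rw [hg]; simp only [Path.extend_zero]
    rw [← hp1, ← hp2]
  have hg1 : g 1 = c₂ * q.1 - c₁ * q.2 := by
    rw [hg]; simp only [Path.extend_one]
    rw [hv'1, hv'2]
  set τ : ℝ := a * (c₂ * p.1 - c₁ * p.2) + b * (c₂ * q.1 - c₁ * q.2) with hτ
  have hτmem : τ ∈ uIcc (g 0) (g 1) := by
    rw [hg0, hg1, hτ]
    exact mem_uIcc_combo ha hb hab
  have hsub := intermediate_value_uIcc (a := (0:ℝ)) (b := 1) (f := g)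
    hgc.continuousOn
  obtain ⟨s₀, hs₀, hgs₀⟩ := hsub hτmem
  rw [uIcc_of_le (zero_le_one' ℝ)] at hs₀
  have hxmem : γ.extend s₀ ∈ MS B := by
    rw [γ.extend_apply hs₀]
    exact hγ _
  set x := γ.extend s₀ with hx
  -- now solve for the image point
  have e1 : c₁ * qf A₁ x + c₂ * qf A₂ x = m := by
    have := hxmem.2
    rw [hqB, hxmem.1] at this
    linarith
  have e2 : c₂ * qf A₁ x - c₁ * qf A₂ x = τ := hgs₀
  have hz1 : c₁ * (a * p.1 + b * q.1) + c₂ * (a * p.2 + b * q.2) = m := by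
    have hthis : c₁ * p.1 + c₂ * p.2 = m := hm.symm
    linear_combination a * hthis + b * hcq + m * hab
  have hz2 : c₂ * (a * p.1 + b * q.1) - c₁ * (a * p.2 + b * q.2) = τ := by
    rw [hτ]; ring
  have hcc : 0 < c₁ ^ 2 + c₂ ^ 2 := by
    have : c₁ ≠ 0 ∨ c₂ ≠ 0 := by
      by_contra hcon
      push_neg at hcon
      apply hpq
      have h1 : p.2 = q.2 := by have := hcon.1; rw [hc₁] at this; linarith
      have h2 : p.1 = q.1 := by have := hcon.2; rw [hc₂] at this; linarith
      exact Prod.ext h2 h1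
    rcases this with h | h <;> positivity
  have hF1 : qf A₁ x = a * p.1 + b * q.1 := by
    have key : (c₁ ^ 2 + c₂ ^ 2) * (qf A₁ x - (a * p.1 + b * q.1)) = 0 := by
      linear_combination c₁ * e1 + c₂ * e2 - c₁ * hz1 - c₂ * hz2
    have := mul_eq_zero.mp key
    rcases this with h | h
    · exact absurd h (ne_of_gt hcc)
    · linarith
  have hF2 : qf A₂ x = a * p.2 + b * q.2 := by
    have key : (c₁ ^ 2 + c₂ ^ 2) * (qf A₂ x - (a * p.2 + b * q.2)) = 0 := by
      linear_combination c₂ * e1 - c₁ * e2 - c₂ * hz1 + c₁ * hz2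
    have := mul_eq_zero.mp key
    rcases this with h | h
    · exact absurd h (ne_of_gt hcc)
    · linarith
  refine ⟨x, hxmem.1, ?_⟩
  have : a • p + b • q = (a * p.1 + b * q.1, a * p.2 + b * q.2) := by
    simp [Prod.ext_iff, Prod.smul_fst, Prod.smul_snd, smul_eq_mul]
  rw [this, hF1, hF2]

end AB

open AB in
theorem annulus_brickman (n : ℕ) (hn : 3 ≤ n)
    (A₁ A₂ : Matrix (Fin n) (Fin n) ℝ) (hA₁ : A₁.IsSymm) (hA₂ : A₂.IsSymm)
    (α₁ α₂ : ℝ) (h0 : 0 < α₁) (h12 : α₁ < α₂) :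
    let W₃ : Set (ℝ × ℝ) :=
      {p | ∃ x : Fin n → ℝ, α₁ ≤ x ⬝ᵥ x ∧ x ⬝ᵥ x ≤ α₂ ∧
        p = (x ⬝ᵥ A₁.mulVec x, x ⬝ᵥ A₂.mulVec x)}
    Convex ℝ W₃ ∧ IsCompact W₃ := by
  intro W₃
  have hW : W₃ = {p | ∃ x : Fin n → ℝ, α₁ ≤ x ⬝ᵥ x ∧ x ⬝ᵥ x ≤ α₂ ∧
      p = (qf A₁ x, qf A₂ x)} := rfl
  constructor
  · -- convexity
    have hSI := SI_convex hn hA₁ hA₂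
    rintro p ⟨x, hx1, hx2, hpx⟩ q ⟨y, hy1, hy2, hqy⟩ a b ha hb hab
    -- normalize x and y
    have hx0 : (0:ℝ) < x ⬝ᵥ x := lt_of_lt_of_le h0 hx1
    have hy0 : (0:ℝ) < y ⬝ᵥ y := lt_of_lt_of_le h0 hy1
    set t₁ : ℝ := x ⬝ᵥ x with ht₁
    set t₂ : ℝ := y ⬝ᵥ y with ht₂
    set u : Fin n → ℝ := (Real.sqrt t₁)⁻¹ • x with hu
    set v : Fin n → ℝ := (Real.sqrt t₂)⁻¹ • y with hv
    have hst₁ : Real.sqrt t₁ ^ 2 = t₁ := Real.sq_sqrt hx0.le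
    have hst₂ : Real.sqrt t₂ ^ 2 = t₂ := Real.sq_sqrt hy0.le
    have hst₁0 : Real.sqrt t₁ ≠ 0 := by
      intro h; rw [h] at hst₁; simp at hst₁; exact absurd hst₁.symm (ne_of_gt hx0)
    have hst₂0 : Real.sqrt t₂ ≠ 0 := by
      intro h; rw [h] at hst₂; simp at hst₂; exact absurd hst₂.symm (ne_of_gt hy0)
    have hu1 : u ⬝ᵥ u = 1 := by
      rw [hu, dotSelf_smul, inv_pow, ← hst₁]
      field_simp
      rw [Real.sq_sqrt (sq_nonneg _), hst₁]
    have hv1 : v ⬝ᵥ v = 1 := by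
      rw [hv, dotSelf_smul, inv_pow, ← hst₂]
      field_simp
      rw [Real.sq_sqrt (sq_nonneg _), hst₂]
    have hqu : ∀ A : Matrix (Fin n) (Fin n) ℝ, qf A x = t₁ * qf A u := by
      intro A
      rw [hu, qf_smul, inv_pow, ← mul_assoc, hst₁]
      field_simp
    have hqv : ∀ A : Matrix (Fin n) (Fin n) ℝ, qf A y = t₂ * qf A v := by
      intro A
      rw [hv, qf_smul, inv_pow, ← mul_assoc, hst₂]
      field_simp
    -- convex combination of weights
    set t : ℝ := a * t₁ + b * t₂ with ht
    have htlo : α₁ ≤ t := by nlinarith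
    have hthi : t ≤ α₂ := by nlinarith
    have ht0 : (0:ℝ) < t := lt_of_lt_of_le h0 htlo
    set μ : ℝ := a * t₁ / t with hμ
    set ν : ℝ := b * t₂ / t with hν
    have hμ0 : 0 ≤ μ := div_nonneg (mul_nonneg ha hx0.le) ht0.le
    have hν0 : 0 ≤ ν := div_nonneg (mul_nonneg hb hy0.le) ht0.le
    have hμν : μ + ν = 1 := by
      rw [hμ, hν, ← add_div, ht]
      field_simp
      exact div_self (ne_of_gt ht0)
    have huSI : (qf A₁ u, qf A₂ u) ∈ SI A₁ A₂ := ⟨u, hu1, rfl⟩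
    have hvSI : (qf A₁ v, qf A₂ v) ∈ SI A₁ A₂ := ⟨v, hv1, rfl⟩
    obtain ⟨w, hw1, hwz⟩ := hSI huSI hvSI hμ0 hν0 hμν
    -- the witness vector
    refine ⟨Real.sqrt t • w, ?_, ?_, ?_⟩
    · rw [dotSelf_smul, Real.sq_sqrt ht0.le, hw1, mul_one]
      exact htlo
    · rw [dotSelf_smul, Real.sq_sqrt ht0.le, hw1, mul_one]
      exact hthi
    · have hz1 : μ * qf A₁ u + ν * qf A₁ v = qf A₁ w := by
        have := congrArg Prod.fst hwz
        simpa using this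
      have hz2 : μ * qf A₂ u + ν * qf A₂ v = qf A₂ w := by
        have := congrArg Prod.snd hwz
        simpa using this
      have e1 : qf A₁ (Real.sqrt t • w) = t * qf A₁ w := by
        rw [qf_smul, Real.sq_sqrt ht0.le]
      have e2 : qf A₂ (Real.sqrt t • w) = t * qf A₂ w := by
        rw [qf_smul, Real.sq_sqrt ht0.le]
      have hμt : t * μ = a * t₁ := by rw [hμ]; field_simp
      have hνt : t * ν = b * t₂ := by rw [hν]; field_simp
      have hp1 : p.1 = qf A₁ x := by rw [hpx]; rfl
      have hp2 : p.2 = qf A₂ x := by rw [hpx]; rfl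
      have hq1 : q.1 = qf A₁ y := by rw [hqy]; rfl
      have hq2 : q.2 = qf A₂ y := by rw [hqy]; rfl
      have : a • p + b • q = (a * p.1 + b * q.1, a * p.2 + b * q.2) := by
        simp [Prod.ext_iff, smul_eq_mul]
      rw [this]
      show (a * p.1 + b * q.1, a * p.2 + b * q.2)
          = (qf A₁ (Real.sqrt t • w), qf A₂ (Real.sqrt t • w))
      rw [e1, e2, ← hz1, ← hz2, Prod.ext_iff]
      constructor
      · show a * p.1 + b * q.1 = t * (μ * qf A₁ u + ν * qf A₁ v)
        rw [hp1, hq1, hqu A₁, hqv A₁]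
        linear_combination (qf A₁ u) * hμt.symm + (qf A₁ v) * hνt.symm
      · show a * p.2 + b * q.2 = t * (μ * qf A₂ u + ν * qf A₂ v)
        rw [hp2, hq2, hqu A₂, hqv A₂]
        linear_combination (qf A₂ u) * hμt.symm + (qf A₂ v) * hνt.symm
  · -- compactness
    set K : Set (Fin n → ℝ) := {x | α₁ ≤ x ⬝ᵥ x ∧ x ⬝ᵥ x ≤ α₂} with hK
    have himg : W₃ = (fun x => (qf A₁ x, qf A₂ x)) '' K := by
      ext p
      constructor
      · rintro ⟨x, h1, h2, h3⟩; exact ⟨x, ⟨h1, h2⟩, h3.symm⟩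
      · rintro ⟨x, ⟨h1, h2⟩, h3⟩; exact ⟨x, h1, h2, h3.symm⟩
    rw [himg]
    have hKc : IsCompact K := by
      apply Metric.isCompact_of_isClosed_isBounded
      · have : K = (fun x : Fin n → ℝ => x ⬝ᵥ x) ⁻¹' (Icc α₁ α₂) := by
          ext x; simp [hK, mem_Icc]
        rw [this]
        exact (isClosed_Icc).preimage continuous_dotSelf
      · rw [Metric.isBounded_iff_subset_closedBall 0]
        refine ⟨Real.sqrt α₂, fun x hx => ?_⟩
        rw [mem_closedBall_zero_iff]
        have hbound : ∀ i, |x i| ≤ Real.sqrt α₂ := by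
          intro i
          have h1 : x i ^ 2 ≤ x ⬝ᵥ x := by
            have : x ⬝ᵥ x = ∑ j, x j * x j := rfl
            rw [this]
            have := Finset.single_le_sum (f := fun j => x j * x j)
              (fun j _ => mul_self_nonneg (x j)) (Finset.mem_univ i)
            rw [sq]; exact this
          have h2 : x i ^ 2 ≤ α₂ := le_trans h1 hx.2
          have := Real.sqrt_le_sqrt h2
          rwa [Real.sqrt_sq_eq_abs] at this
        calc ‖x‖ = ‖x‖ := rfl
          _ ≤ Real.sqrt α₂ := by
            apply pi_norm_le_iff_of_nonneg (Real.sqrt_nonneg _) |>.2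
            intro i
            rw [Real.norm_eq_abs]
            exact hbound i
    exact hKc.image (by
      exact Continuous.prodMk (continuous_qf A₁) (continuous_qf A₂))
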